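/- Let W_p act on a quadratic form by [a,b,c]∘W_p = [pc, −b, a/p] (when p divides a). For a prime p and discriminant −d with p ∤ d, the natural map from Γ₀(p)-orbits of forms [a,b,c] with p | a and b ≡ h (mod 2p) (where h² ≡ −d mod 4p) to Γ₀*(p)-orbits of forms [a,b,c] with p | a is a bijection. -/

import Mathlib

/-- A binary quadratic form `[a,b,c]` encoded as `(a, b, c) : ℤ × ℤ × ℤ`. -/
abbrev BQF : Type := ℤ × ℤ × ℤ

abbrev SL2Z : Type := Matrix.SpecialLinearGroup (Fin 2) ℤ

/-- The substitution action `(Q ∘ γ)(x,y) = Q(Ax + By, Cx + Dy)`. -/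
def bqfAct (Q : BQF) (γ : SL2Z) : BQF :=
  let A := γ.1 0 0; let B := γ.1 0 1; let C := γ.1 1 0; let D := γ.1 1 1
  (Q.1 * A ^ 2 + Q.2.1 * A * C + Q.2.2 * C ^ 2,
   2 * Q.1 * A * B + Q.2.1 * (A * D + B * C) + 2 * Q.2.2 * C * D,
   Q.1 * B ^ 2 + Q.2.1 * B * D + Q.2.2 * D ^ 2)

/-- Forms in `Q_{d,p,h}`: positive definite, discriminant `-d`, `p ∣ a`, `b ≡ h (mod 2p)`. -/
def QDPH (d p h : ℤ) : Type :=
  {Q : BQF // 0 < Q.1 ∧ Q.2.1 ^ 2 - 4 * Q.1 * Q.2.2 = -d ∧ p ∣ Q.1 ∧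
    Q.2.1 ≡ h [ZMOD 2 * p]}

/-- Forms in `Q_{d,p}`: positive definite, discriminant `-d`, `p ∣ a`. -/
def QDP (d p : ℤ) : Type :=
  {Q : BQF // 0 < Q.1 ∧ Q.2.1 ^ 2 - 4 * Q.1 * Q.2.2 = -d ∧ p ∣ Q.1}

/-- `Γ₀(p)`-equivalence: related by some `γ ∈ SL₂(ℤ)` with lower-left entry divisible by `p`. -/
def gamma0Rel (d p h : ℤ) (Q Q' : QDPH d p h) : Prop :=
  ∃ γ : SL2Z, (p ∣ γ.1 1 0) ∧ bqfAct Q.1 γ = Q'.1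

/-- One step of the Fricke group action on `Q_{d,p}`: either a `Γ₀(p)`-substitution, or the
Fricke involution `[a,b,c] ∘ W_p = [pc, -b, a/p]`. -/
def frickeStep (d p : ℤ) (Q Q' : QDP d p) : Prop :=
  (∃ γ : SL2Z, (p ∣ γ.1 1 0) ∧ bqfAct Q.1 γ = Q'.1) ∨
  (Q'.1.1 = p * Q.1.2.2 ∧ Q'.1.2.1 = -Q.1.2.1 ∧ p * Q'.1.2.2 = Q.1.1)

/-- `Γ₀*(p)`-equivalence on `Q_{d,p}`: the equivalence relation generated by `frickeStep`. -/
def frickeRel (d p : ℤ) : QDP d p → QDP d p → Prop :=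
  Relation.EqvGen (frickeStep d p)

namespace Stmt7Aux

lemma sl2_det (γ : SL2Z) : γ.1 0 0 * γ.1 1 1 - γ.1 0 1 * γ.1 1 0 = 1 := by
  have := γ.2; rwa [Matrix.det_fin_two] at this

lemma bqfAct_comps (a b c : ℤ) (γ : SL2Z) :
    bqfAct (a, b, c) γ =
      (a * (γ.1 0 0) ^ 2 + b * (γ.1 0 0) * (γ.1 1 0) + c * (γ.1 1 0) ^ 2,
       2 * a * (γ.1 0 0) * (γ.1 0 1) + b * ((γ.1 0 0) * (γ.1 1 1) + (γ.1 0 1) * (γ.1 1 0))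
         + 2 * c * (γ.1 1 0) * (γ.1 1 1),
       a * (γ.1 0 1) ^ 2 + b * (γ.1 0 1) * (γ.1 1 1) + c * (γ.1 1 1) ^ 2) := rfl

lemma bqfAct_mul (Q : BQF) (γ δ : SL2Z) :
    bqfAct (bqfAct Q γ) δ = bqfAct Q (γ * δ) := by
  obtain ⟨a, b, c⟩ := Q
  simp only [bqfAct, Matrix.SpecialLinearGroup.coe_mul, Matrix.mul_apply,
    Fin.sum_univ_two, Prod.mk.injEq]
  refine ⟨by ring, by ring, by ring⟩

lemma bqfAct_one (Q : BQF) : bqfAct Q 1 = Q := by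
  obtain ⟨a, b, c⟩ := Q
  simp [bqfAct, Matrix.one_apply]

lemma sl2_inv_10 (γ : SL2Z) : (γ⁻¹).1 1 0 = -γ.1 1 0 := by
  rw [Matrix.SpecialLinearGroup.SL2_inv_expl]
  rfl

lemma mul_entry_10 (γ δ : SL2Z) :
    (γ * δ).1 1 0 = γ.1 1 0 * δ.1 0 0 + γ.1 1 1 * δ.1 1 0 := by
  simp [Matrix.SpecialLinearGroup.coe_mul, Matrix.mul_apply, Fin.sum_univ_two]

section
variable {p d : ℤ}

lemma act_mem (hd : 0 < d) (Q : QDP d p) (γ : SL2Z) (hγ : p ∣ γ.1 1 0) :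
    0 < (bqfAct Q.1 γ).1 ∧
      (bqfAct Q.1 γ).2.1 ^ 2 - 4 * (bqfAct Q.1 γ).1 * (bqfAct Q.1 γ).2.2 = -d
      ∧ p ∣ (bqfAct Q.1 γ).1 := by
  obtain ⟨⟨a, b, c⟩, ha, hdisc, hdvd⟩ := Q
  dsimp only at ha hdisc hdvd
  rw [bqfAct_comps]
  dsimp only
  set A := γ.1 0 0 with hA'
  set B := γ.1 0 1
  set C := γ.1 1 0
  set D := γ.1 1 1
  have hdet : A * D - B * C = 1 := sl2_det γ
  obtain ⟨C0, hC0⟩ := hγ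
  obtain ⟨a0, ha0⟩ := hdvd
  refine ⟨?_, ?_, ?_⟩
  · have key : 4 * a * (a * A ^ 2 + b * A * C + c * C ^ 2)
        = (2 * a * A + b * C) ^ 2 + d * C ^ 2 := by linear_combination (-C^2) * hdisc
    rcases eq_or_ne C 0 with hC | hC
    · rw [hC] at key hdet ⊢
      have hA : A ≠ 0 := by intro h0; rw [h0] at hdet; simp at hdet
      have h2 : 0 < A ^ 2 := by positivity
      nlinarith
    · have h4 : 0 < 4 * a * (a * A ^ 2 + b * A * C + c * C ^ 2) := by
        rw [key]; positivity
      nlinarith [h4]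
  · have key : (2 * a * A * B + b * (A * D + B * C) + 2 * c * C * D) ^ 2
        - 4 * (a * A ^ 2 + b * A * C + c * C ^ 2) * (a * B ^ 2 + b * B * D + c * D ^ 2)
        = (A * D - B * C) ^ 2 * (b ^ 2 - 4 * a * c) := by ring
    rw [key, hdet]; linarith [hdisc]
  · exact ⟨a0 * A ^ 2 + b * A * C0 + c * C0 ^ 2 * p, by rw [ha0, hC0]; ring⟩

/-- The `Γ₀(p)` action on `QDP`. -/
def gQ (hd : 0 < d) (Q : QDP d p) (γ : SL2Z) (hγ : p ∣ γ.1 1 0) : QDP d p :=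
  ⟨bqfAct Q.1 γ, act_mem hd Q γ hγ⟩

/-- The Fricke involution on triples. -/
def wBQF (p : ℤ) (Q : BQF) : BQF := (p * Q.2.2, -Q.2.1, Q.1 / p)

lemma w_mem (hp : 0 < p) (hd : 0 < d) (Q : QDP d p) :
    0 < (wBQF p Q.1).1 ∧
      (wBQF p Q.1).2.1 ^ 2 - 4 * (wBQF p Q.1).1 * (wBQF p Q.1).2.2 = -d
      ∧ p ∣ (wBQF p Q.1).1 := by
  obtain ⟨⟨a, b, c⟩, ha, hdisc, hdvd⟩ := Q
  dsimp only at ha hdisc hdvd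
  obtain ⟨a0, rfl⟩ := hdvd
  have hp0 : p ≠ 0 := hp.ne'
  have hc : 0 < c := by nlinarith
  simp only [wBQF, Int.mul_ediv_cancel_left _ hp0]
  refine ⟨by positivity, by linear_combination hdisc, ⟨c, rfl⟩⟩

/-- The Fricke involution on `QDP`. -/
def wQ (hp : 0 < p) (hd : 0 < d) (Q : QDP d p) : QDP d p :=
  ⟨wBQF p Q.1, w_mem hp hd Q⟩

lemma wQ_wQ (hp : 0 < p) (hd : 0 < d) (Q : QDP d p) : wQ hp hd (wQ hp hd Q) = Q := by
  apply Subtype.ext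
  have hp0 : p ≠ 0 := hp.ne'
  show (p * (Q.1.1 / p), -(-Q.1.2.1), p * Q.1.2.2 / p) = Q.1
  rw [Int.mul_ediv_cancel' Q.2.2.2, neg_neg, Int.mul_ediv_cancel_left _ hp0]

lemma frickeStep_wQ (hp : 0 < p) (hd : 0 < d) (Q : QDP d p) :
    frickeStep d p Q (wQ hp hd Q) := by
  right
  obtain ⟨a0, ha0⟩ := Q.2.2.2
  refine ⟨rfl, rfl, ?_⟩
  show p * (Q.1.1 / p) = Q.1.1
  rw [ha0, Int.mul_ediv_cancel_left _ hp.ne']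

/-- The Fricke involution intertwines the `Γ₀(p)` actions. -/
lemma w_comm (hp : 0 < p) (hd : 0 < d) (Q : QDP d p) (γ : SL2Z) (hγ : p ∣ γ.1 1 0) :
    ∃ δ : SL2Z, (p ∣ δ.1 1 0) ∧ bqfAct (wQ hp hd Q).1 δ = (wQ hp hd (gQ hd Q γ hγ)).1 := by
  have hp0 : p ≠ 0 := hp.ne'
  obtain ⟨C0, hC0⟩ := hγ
  have hdet : γ.1 0 0 * γ.1 1 1 - γ.1 0 1 * γ.1 1 0 = 1 := sl2_det γ
  refine ⟨⟨!![γ.1 1 1, -C0; -(p * γ.1 0 1), γ.1 0 0], ?_⟩, ?_, ?_⟩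
  · rw [Matrix.det_fin_two_of]
    linear_combination hdet + γ.1 0 1 * hC0
  · show p ∣ -(p * γ.1 0 1)
    exact dvd_neg.mpr ⟨γ.1 0 1, rfl⟩
  · obtain ⟨⟨a, b, c⟩, hQ⟩ := Q
    obtain ⟨ha, hdisc, hdvd⟩ := hQ
    dsimp only at ha hdisc hdvd
    obtain ⟨a0, rfl⟩ := hdvd
    show bqfAct (wBQF p (p * a0, b, c)) _ = wBQF p (bqfAct (p * a0, b, c) γ)
    erw [bqfAct_comps, bqfAct_comps]
    simp only [wBQF, Int.mul_ediv_cancel_left _ hp0, Matrix.cons_val', Matrix.cons_val_zero,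
      Matrix.cons_val_one, Matrix.head_cons, Matrix.head_fin_const, Matrix.empty_val',
      Matrix.cons_val_fin_one, Matrix.of_apply]
    have hnum : p * a0 * γ.1 0 0 ^ 2 + b * γ.1 0 0 * γ.1 1 0 + c * γ.1 1 0 ^ 2
        = p * (a0 * γ.1 0 0 ^ 2 + b * γ.1 0 0 * C0 + c * C0 ^ 2 * p) := by
      rw [hC0]; ring
    rw [hnum, Int.mul_ediv_cancel_left _ hp0]
    refine Prod.ext ?_ (Prod.ext ?_ ?_)
    · show p * c * (γ.1 1 1) ^ 2 + -b * γ.1 1 1 * (-(p * γ.1 0 1))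
        + a0 * (-(p * γ.1 0 1)) ^ 2 = _
      ring
    · show 2 * (p * c) * γ.1 1 1 * (-C0) + -b * (γ.1 1 1 * γ.1 0 0 + -C0 * -(p * γ.1 0 1))
        + 2 * a0 * (-(p * γ.1 0 1)) * γ.1 0 0 = _
      rw [hC0]; ring
    · show p * c * (-C0) ^ 2 + -b * (-C0) * γ.1 0 0 + a0 * (γ.1 0 0) ^ 2 = _
      rw [hC0]; ring

lemma b_invariant (Q : QDP d p) (γ : SL2Z) (hγ : p ∣ γ.1 1 0) :
    (bqfAct Q.1 γ).2.1 ≡ Q.1.2.1 [ZMOD 2 * p] := by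
  obtain ⟨⟨a, b, c⟩, hQ⟩ := Q
  obtain ⟨ha, hdisc, hdvd⟩ := hQ
  dsimp only at ha hdisc hdvd
  obtain ⟨a0, rfl⟩ := hdvd
  obtain ⟨C0, hC0⟩ := hγ
  have hdet : γ.1 0 0 * γ.1 1 1 - γ.1 0 1 * γ.1 1 0 = 1 := sl2_det γ
  rw [Int.modEq_iff_dvd]
  show 2 * p ∣ b - (bqfAct (p * a0, b, c) γ).2.1
  rw [bqfAct_comps]
  refine ⟨-(a0 * γ.1 0 0 * γ.1 0 1 + b * γ.1 0 1 * C0 + c * C0 * γ.1 1 1), ?_⟩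
  dsimp only
  rw [hC0]
  linear_combination (-b) * hdet - b * γ.1 0 1 * hC0

lemma b_pm (hpp : Prime p) (Q : QDP d p) {h : ℤ} (hh : h ^ 2 ≡ -d [ZMOD 4 * p]) :
    Q.1.2.1 ≡ h [ZMOD 2 * p] ∨ Q.1.2.1 ≡ -h [ZMOD 2 * p] := by
  obtain ⟨⟨a, b, c⟩, hQ⟩ := Q
  obtain ⟨ha, hdisc, hdvd⟩ := hQ
  dsimp only at ha hdisc hdvd ⊢
  obtain ⟨a0, rfl⟩ := hdvd
  have h1 : (4 * p) ∣ (b ^ 2 + d) := ⟨a0 * c, by linear_combination hdisc⟩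
  have h2 : (4 * p) ∣ (h ^ 2 + d) := by
    have h0 := Int.ModEq.dvd hh
    obtain ⟨k, hk⟩ := h0
    exact ⟨-k, by linarith⟩
  have key : (4 * p) ∣ (b - h) * (b + h) := by
    obtain ⟨k, hk⟩ := h1
    obtain ⟨m, hm⟩ := h2
    exact ⟨k - m, by linear_combination hk - hm⟩
  have h2u : (2 : ℤ) ∣ (b - h) := by
    rcases Int.even_or_odd (b - h) with he | ho
    · exact he.two_dvd
    · exfalso
      have ho2 : Odd (b + h) := by
        obtain ⟨k, hk⟩ := ho; exact ⟨k + h, by linarith⟩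
      have hodd : Odd ((b - h) * (b + h)) := ho.mul ho2
      have heven : (2 : ℤ) ∣ (b - h) * (b + h) := dvd_trans ⟨2 * p, by ring⟩ key
      obtain ⟨k, hk⟩ := hodd
      obtain ⟨m, hm⟩ := heven
      omega
  obtain ⟨u, hu⟩ := h2u
  have hv : b + h = 2 * (u + h) := by linarith
  have hpdvd : p ∣ u * (u + h) := by
    obtain ⟨k, hk⟩ := key
    refine ⟨k, ?_⟩
    have h4 : (4 : ℤ) * (u * (u + h)) = 4 * (p * k) := by
      rw [hu, hv] at hk; linarith
    exact mul_left_cancel₀ (by norm_num : (4:ℤ) ≠ 0) h4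
  rcases hpp.dvd_mul.mp hpdvd with hpu | hpv
  · left
    rw [Int.modEq_iff_dvd]
    obtain ⟨m, hm⟩ := hpu
    exact ⟨-m, by linear_combination -hu - 2 * hm⟩
  · right
    rw [Int.modEq_iff_dvd]
    obtain ⟨m, hm⟩ := hpv
    exact ⟨-m, by linear_combination -hv - 2 * hm⟩

/-- `Γ₀*(p)`-equivalence, explicitly: `Q' = Q ∘ γ` or `Q' = W(Q) ∘ γ` for some `γ ∈ Γ₀(p)`. -/
def R (hp : 0 < p) (hd : 0 < d) (Q Q' : QDP d p) : Prop :=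
  (∃ γ : SL2Z, (p ∣ γ.1 1 0) ∧ bqfAct Q.1 γ = Q'.1) ∨
  (∃ γ : SL2Z, (p ∣ γ.1 1 0) ∧ bqfAct (wQ hp hd Q).1 γ = Q'.1)

lemma one_entry_10 : ((1 : SL2Z)).1 1 0 = 0 := by
  simp [Matrix.SpecialLinearGroup.coe_one, Matrix.one_apply]

lemma R_refl (hp : 0 < p) (hd : 0 < d) (Q : QDP d p) : R hp hd Q Q :=
  Or.inl ⟨1, by simp [one_entry_10], bqfAct_one Q.1⟩

lemma g_inv (Q Q' : QDP d p) (γ : SL2Z) (hγ : p ∣ γ.1 1 0)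
    (hg : bqfAct Q.1 γ = Q'.1) :
    ∃ δ : SL2Z, (p ∣ δ.1 1 0) ∧ bqfAct Q'.1 δ = Q.1 := by
  refine ⟨γ⁻¹, by rw [sl2_inv_10]; exact dvd_neg.mpr hγ, ?_⟩
  rw [← hg, bqfAct_mul, mul_inv_cancel, bqfAct_one]

lemma R_symm (hp : 0 < p) (hd : 0 < d) {Q Q' : QDP d p} (hr : R hp hd Q Q') :
    R hp hd Q' Q := by
  rcases hr with ⟨γ, hγ, hg⟩ | ⟨γ, hγ, hg⟩
  · obtain ⟨δ, hδ, hgd⟩ := g_inv Q Q' γ hγ hg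
    exact Or.inl ⟨δ, hδ, hgd⟩
  · obtain ⟨δ, hδ, hgd⟩ := g_inv (wQ hp hd Q) Q' γ hγ hg
    have hQeq : gQ hd Q' δ hδ = wQ hp hd Q := Subtype.ext hgd
    obtain ⟨ε, hε, hge⟩ := w_comm hp hd Q' δ hδ
    right
    refine ⟨ε, hε, ?_⟩
    rw [hge, hQeq, wQ_wQ]

lemma mul_mem10 {γ δ : SL2Z} (hγ : p ∣ γ.1 1 0) (hδ : p ∣ δ.1 1 0) :
    p ∣ (γ * δ).1 1 0 := by
  rw [mul_entry_10]
  exact dvd_add (hγ.mul_right _) (hδ.mul_left _)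

lemma R_trans (hp : 0 < p) (hd : 0 < d) {Q Q' Q'' : QDP d p}
    (h1 : R hp hd Q Q') (h2 : R hp hd Q' Q'') : R hp hd Q Q'' := by
  rcases h1 with ⟨γ, hγ, hg⟩ | ⟨γ, hγ, hg⟩
  · rcases h2 with ⟨δ, hδ, hg'⟩ | ⟨δ, hδ, hg'⟩
    · exact Or.inl ⟨γ * δ, mul_mem10 hγ hδ, by rw [← bqfAct_mul, hg, hg']⟩
    · have hQ' : gQ hd Q γ hγ = Q' := Subtype.ext hg
      obtain ⟨ε, hε, hge⟩ := w_comm hp hd Q γ hγ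
      rw [hQ'] at hge
      exact Or.inr ⟨ε * δ, mul_mem10 hε hδ, by rw [← bqfAct_mul, hge, hg']⟩
  · rcases h2 with ⟨δ, hδ, hg'⟩ | ⟨δ, hδ, hg'⟩
    · exact Or.inr ⟨γ * δ, mul_mem10 hγ hδ, by rw [← bqfAct_mul, hg, hg']⟩
    · have hQ' : gQ hd (wQ hp hd Q) γ hγ = Q' := Subtype.ext hg
      obtain ⟨ε, hε, hge⟩ := w_comm hp hd (wQ hp hd Q) γ hγ
      rw [hQ', wQ_wQ] at hge
      exact Or.inl ⟨ε * δ, mul_mem10 hε hδ, by rw [← bqfAct_mul, hge, hg']⟩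

lemma R_equiv (hp : 0 < p) (hd : 0 < d) : Equivalence (R hp hd) :=
  ⟨R_refl hp hd, R_symm hp hd, R_trans hp hd⟩

lemma step_le_R (hp : 0 < p) (hd : 0 < d) {Q Q' : QDP d p}
    (hs : frickeStep d p Q Q') : R hp hd Q Q' := by
  rcases hs with ⟨γ, hγ, hg⟩ | ⟨ha, hb, hc⟩
  · exact Or.inl ⟨γ, hγ, hg⟩
  · right
    refine ⟨1, by simp [one_entry_10], ?_⟩
    rw [bqfAct_one]
    have hc' : Q'.1.2.2 = Q.1.1 / p := by
      rw [← hc, Int.mul_ediv_cancel_left _ hp.ne']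
    show (p * Q.1.2.2, -Q.1.2.1, Q.1.1 / p) = Q'.1
    rw [← ha, ← hb, ← hc']

lemma frickeRel_le_R (hp : 0 < p) (hd : 0 < d) {Q Q' : QDP d p}
    (hr : frickeRel d p Q Q') : R hp hd Q Q' :=
  (R_equiv hp hd).eqvGen_iff.mp (Relation.EqvGen.mono (fun _ _ hab => step_le_R hp hd hab) _ _ hr)

end
end Stmt7Aux

/-- For a prime `p` and discriminant `-d` with `p ∤ d`, the natural map
`Q_{d,p,h}/Γ₀(p) → Q_{d,p}/Γ₀*(p)` is a bijection. -/
theorem stmt7 (p : ℕ) (hp : p.Prime) (d h : ℤ) (hd : 0 < d)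
    (hpd : ¬ ((p : ℤ) ∣ d)) (hh : h ^ 2 ≡ -d [ZMOD 4 * p]) :
    ∃ F : Quot (gamma0Rel d p h) → Quot (frickeRel d p),
      Function.Bijective F ∧
      ∀ Q : QDPH d (p : ℤ) h,
        F (Quot.mk _ Q) =
          Quot.mk _ (⟨Q.1, Q.2.1, Q.2.2.1, Q.2.2.2.1⟩ : QDP d p) := by
  classical
  have hp0 : (0 : ℤ) < p := by exact_mod_cast hp.pos
  have hpp : Prime ((p : ℕ) : ℤ) := Nat.prime_iff_prime_int.mp hp
  set ι : QDPH d p h → QDP d p := fun Q => ⟨Q.1, Q.2.1, Q.2.2.1, Q.2.2.2.1⟩ with hι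
  have hsound : ∀ Q Q' : QDPH d p h, gamma0Rel d p h Q Q' →
      Quot.mk (frickeRel d p) (ι Q) = Quot.mk _ (ι Q') := fun Q Q' hrel =>
    Quot.sound (Relation.EqvGen.rel _ _ (Or.inl hrel))
  refine ⟨Quot.lift (fun Q => Quot.mk _ (ι Q)) hsound, ⟨?_, ?_⟩, fun Q => rfl⟩
  · -- injectivity
    intro x y hxy
    obtain ⟨Q, rfl⟩ := Quot.exists_rep x
    obtain ⟨Q', rfl⟩ := Quot.exists_rep y
    have hEG : Relation.EqvGen (frickeRel d p) (ι Q) (ι Q') := Quot.eqvGen_exact hxy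
    have hfr : Stmt7Aux.R hp0 hd (ι Q) (ι Q') :=
      (Stmt7Aux.R_equiv hp0 hd).eqvGen_iff.mp
        (Relation.EqvGen.mono
          (fun _ _ hab => Stmt7Aux.frickeRel_le_R hp0 hd hab) _ _ hEG)
    apply Quot.sound
    rcases hfr with ⟨γ, hγ, hg⟩ | ⟨γ, hγ, hg⟩
    · exact ⟨γ, hγ, hg⟩
    · exfalso
      have hbi : (ι Q').1.2.1 ≡ (Stmt7Aux.wQ hp0 hd (ι Q)).1.2.1 [ZMOD 2 * (p : ℤ)] := by
        rw [← hg]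
        exact Stmt7Aux.b_invariant (Stmt7Aux.wQ hp0 hd (ι Q)) γ hγ
      have hw : (Stmt7Aux.wQ hp0 hd (ι Q)).1.2.1 = -(Q.1.2.1) := rfl
      have hbQ : Q.1.2.1 ≡ h [ZMOD 2 * p] := Q.2.2.2.2
      have hcon : h ≡ -h [ZMOD 2 * (p : ℤ)] := by
        have s1 : h ≡ Q'.1.2.1 [ZMOD 2 * p] := Q'.2.2.2.2.symm
        have s2 : (-(Q.1.2.1) : ℤ) ≡ -h [ZMOD 2 * p] := hbQ.neg
        exact (s1.trans (hw ▸ hbi)).trans s2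
      have hdvd2 : (2 * (p : ℤ)) ∣ (-h - h) := Int.ModEq.dvd hcon
      have hph : ((p : ℤ)) ∣ h := by
        obtain ⟨k, hk⟩ := hdvd2
        exact ⟨-k, by linarith⟩
      apply hpd
      have h4 := Int.ModEq.dvd hh
      obtain ⟨k, hk⟩ := h4
      obtain ⟨m, hm⟩ := hph
      exact ⟨-4 * k - p * m ^ 2, by linear_combination -hk - (h + (p : ℤ) * m) * hm⟩
  · -- surjectivity
    intro x
    obtain ⟨Q, rfl⟩ := Quot.exists_rep x
    rcases Stmt7Aux.b_pm hpp Q hh with hb | hb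
    · exact ⟨Quot.mk _ ⟨Q.1, Q.2.1, Q.2.2.1, Q.2.2.2, hb⟩,
        congrArg (Quot.mk _) (Subtype.ext rfl)⟩
    · have hb' : (Stmt7Aux.wQ hp0 hd Q).1.2.1 ≡ h [ZMOD 2 * (p : ℤ)] := by
        show -Q.1.2.1 ≡ h [ZMOD 2 * (p : ℤ)]
        have := hb.neg
        rwa [neg_neg] at this
      refine ⟨Quot.mk _ ⟨(Stmt7Aux.wQ hp0 hd Q).1, (Stmt7Aux.wQ hp0 hd Q).2.1,
        (Stmt7Aux.wQ hp0 hd Q).2.2.1, (Stmt7Aux.wQ hp0 hd Q).2.2.2, hb'⟩, ?_⟩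
      have hιw : ι ⟨(Stmt7Aux.wQ hp0 hd Q).1, (Stmt7Aux.wQ hp0 hd Q).2.1,
          (Stmt7Aux.wQ hp0 hd Q).2.2.1, (Stmt7Aux.wQ hp0 hd Q).2.2.2, hb'⟩
          = Stmt7Aux.wQ hp0 hd Q := Subtype.ext rfl
      show Quot.mk _ (ι _) = Quot.mk _ Q
      rw [hιw]
      exact Quot.sound (Relation.EqvGen.symm _ _
        (Relation.EqvGen.rel _ _ (Stmt7Aux.frickeStep_wQ hp0 hd Q)))
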